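/- (Minty argument for the full regularized operator, Step 4 of the proof of Proposition 4.1.) Let (U, μ) be a finite measure space, δ ≥ 0, ε > 0, and let p_s, p ∈ L²(U). Define the regularized response 𝒮(p, A) := (p_s − p)⁺ A/(|A| + ε) + (1 − δ/|A|)⁺ A for 3×3 matrices A (with the second term equal to 0 when A = 0). Let S, D ∈ L²(U; M₃) and assume that for every A ∈ L²(U; M₃), ∫_U ( S − 𝒮(p, A) ) : (D − A) dμ ≥ 0. Then S = 𝒮(p, D) a.e. in U. -/

import Mathlib

open MeasureTheory Filter Classical
open scoped RealInnerProductSpace Topology ENNReal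

abbrev M3 := EuclideanSpace ℝ (Fin 3 × Fin 3)

noncomputable def regResponse (δ ε ps p : ℝ) (A : M3) : M3 :=
  (max (ps - p) 0 / (‖A‖ + ε)) • A +
    (if A = 0 then 0 else (max (1 - δ / ‖A‖) 0) • A)

lemma norm_regResponse_le (δ ε a b : ℝ) (hδ : 0 ≤ δ) (hε : 0 < ε) (A : M3) :
    ‖regResponse δ ε a b A‖ ≤ max (a - b) 0 + ‖A‖ := by
  unfold regResponse
  refine (norm_add_le _ _).trans (add_le_add ?_ ?_)
  · rw [norm_smul, Real.norm_eq_abs, abs_of_nonneg (by positivity)]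
    rw [div_mul_eq_mul_div, div_le_iff₀ (by positivity)]
    have h1 : ‖A‖ ≤ ‖A‖ + ε := by linarith
    calc max (a - b) 0 * ‖A‖ ≤ max (a - b) 0 * (‖A‖ + ε) :=
      mul_le_mul_of_nonneg_left h1 (le_max_right _ _)
    _ = max (a - b) 0 * (‖A‖ + ε) := rfl
  · split_ifs with hA
    · simp
    · rw [norm_smul, Real.norm_eq_abs, abs_of_nonneg (le_max_right _ _)]
      have h2 : max (1 - δ / ‖A‖) 0 ≤ 1 := by
        apply max_le _ zero_le_one
        have : 0 ≤ δ / ‖A‖ := div_nonneg hδ (norm_nonneg _)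
        linarith
      nlinarith [norm_nonneg A]

lemma continuous_regResponse (δ ε : ℝ) (hδ : 0 ≤ δ) (hε : 0 < ε) :
    Continuous (fun q : ℝ × ℝ × M3 => regResponse δ ε q.1 q.2.1 q.2.2) := by
  unfold regResponse
  apply Continuous.add
  · apply Continuous.fun_smul _ (continuous_snd.comp continuous_snd)
    apply Continuous.div
    · exact ((continuous_fst).sub (continuous_fst.comp continuous_snd)).max continuous_const
    · exact ((continuous_norm.comp (continuous_snd.comp continuous_snd)).add continuous_const)
    · intro q; positivity
  · have hg : Continuous (fun A : M3 => if A = 0 then (0:M3) else (max (1 - δ / ‖A‖) 0) • A) := by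
      rw [continuous_iff_continuousAt]
      intro A
      by_cases hA : A = 0
      · subst hA
        have key : Tendsto (fun A : M3 => if A = 0 then (0:M3) else (max (1 - δ / ‖A‖) 0) • A)
            (𝓝 0) (𝓝 0) := by
          apply squeeze_zero_norm (a := fun B : M3 => ‖B‖)
          · intro B
            split_ifs with hB
            · simp
            · rw [norm_smul, Real.norm_eq_abs, abs_of_nonneg (le_max_right _ _)]
              have h2 : max (1 - δ / ‖B‖) 0 ≤ 1 := by
                apply max_le _ zero_le_one
                have : 0 ≤ δ / ‖B‖ := div_nonneg hδ (norm_nonneg _)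
                linarith
              nlinarith [norm_nonneg B]
          · simpa using continuous_norm.tendsto (0 : M3)
        simpa [ContinuousAt] using key
      · have hcong : (fun B : M3 => (max (1 - δ / ‖B‖) 0) • B)
            =ᶠ[𝓝 A] (fun A : M3 => if A = 0 then (0:M3) else (max (1 - δ / ‖A‖) 0) • A) := by
          filter_upwards [IsOpen.mem_nhds isOpen_compl_singleton hA] with B hB
          have hB' : B ≠ 0 := hB
          simp [hB']
        refine ContinuousAt.congr ?_ hcong
        have h1 : ContinuousAt (fun B : M3 => 1 - δ / ‖B‖) A :=
          continuousAt_const.sub (continuousAt_const.div continuous_norm.continuousAt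
            (by simpa using hA))
        exact (h1.max continuousAt_const).smul continuousAt_id
    exact hg.comp (continuous_snd.comp continuous_snd)

lemma integrable_inner_of_memL2 {U : Type*} [MeasurableSpace U] {μ : Measure U}
    {E : Type*} [NormedAddCommGroup E] [InnerProductSpace ℝ E]
    {f g : U → E} (hf : MemLp f 2 μ) (hg : MemLp g 2 μ) :
    Integrable (fun x => (⟪f x, g x⟫ : ℝ)) μ := by
  have h := L2.integrable_inner (𝕜 := ℝ) (hf.toLp f) (hg.toLp g)
  refine h.congr ?_
  filter_upwards [hf.coeFn_toLp, hg.coeFn_toLp] with x h1 h2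
  rw [h1, h2]
lemma aesm_regResponse {U : Type*} [MeasurableSpace U] {μ : MeasureTheory.Measure U}
    (δ ε : ℝ) (hδ : 0 ≤ δ) (hε : 0 < ε) (ps p : U → ℝ) (A : U → M3)
    (hps : MeasureTheory.AEStronglyMeasurable ps μ)
    (hp : MeasureTheory.AEStronglyMeasurable p μ)
    (hA : MeasureTheory.AEStronglyMeasurable A μ) :
    MeasureTheory.AEStronglyMeasurable (fun x => regResponse δ ε (ps x) (p x) (A x)) μ := by
  have h0 : MeasureTheory.AEStronglyMeasurable (fun x => (ps x, p x, A x)) μ :=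
    hps.prodMk (hp.prodMk hA)
  exact (continuous_regResponse δ ε hδ hε).comp_aestronglyMeasurable (f := fun x => (ps x, p x, A x)) h0
/-- Minty argument for the full regularized operator (Step 4 of the proof of
Proposition 4.1): on a finite measure space, with `δ ≥ 0`, `ε > 0`, `p_s, p ∈ L²(U)`,
if `S, D ∈ L²(U; M₃)` and `∫ (S − 𝒮(p, A)) : (D − A) dμ ≥ 0` for every `A ∈ L²(U; M₃)`,
then `S = 𝒮(p, D)` a.e. in `U`. -/
theorem minty_full_regularized_operator
    {U : Type*} [MeasurableSpace U] (μ : Measure U) [IsFiniteMeasure μ]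
    (δ ε : ℝ) (hδ : 0 ≤ δ) (hε : 0 < ε)
    (ps p : U → ℝ) (hps_mem : MemLp ps 2 μ) (hp_mem : MemLp p 2 μ)
    (S D : U → M3) (hS_mem : MemLp S 2 μ) (hD_mem : MemLp D 2 μ)
    (h : ∀ A : U → M3, MemLp A 2 μ →
      0 ≤ ∫ x, ⟪S x - regResponse δ ε (ps x) (p x) (A x), D x - A x⟫ ∂μ) :
    ∀ᵐ x ∂μ, S x = regResponse δ ε (ps x) (p x) (D x) := by
  -- notation
  set T : U → M3 := fun x => regResponse δ ε (ps x) (p x) (D x) with hT_def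
  -- measurability of the pointwise response applied to an L² function
  have hreg_aesm : ∀ (A : U → M3), MemLp A 2 μ →
      AEStronglyMeasurable (fun x => regResponse δ ε (ps x) (p x) (A x)) μ :=
    fun A hA => aesm_regResponse δ ε hδ hε ps p A hps_mem.aestronglyMeasurable
      hp_mem.aestronglyMeasurable hA.aestronglyMeasurable
  -- the positive part (ps - p)⁺ is in L²
  have hmax_mem : MemLp (fun x => max (ps x - p x) 0) 2 μ := by
    refine MemLp.of_le (hps_mem.sub hp_mem)
      (((hps_mem.sub hp_mem).aestronglyMeasurable.aemeasurable.max
        aemeasurable_const).aestronglyMeasurable) ?_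
    filter_upwards with x
    rw [Real.norm_eq_abs, Real.norm_eq_abs, abs_of_nonneg (le_max_right _ _)]
    exact max_le (le_abs_self _) (abs_nonneg _)
  -- T is in L²
  have hT_mem : MemLp T 2 μ := by
    refine MemLp.of_le (hmax_mem.add hD_mem.norm) (hreg_aesm D hD_mem) ?_
    filter_upwards with x
    calc ‖T x‖ ≤ max (ps x - p x) 0 + ‖D x‖ := norm_regResponse_le δ ε _ _ hδ hε _
    _ ≤ |max (ps x - p x) 0 + ‖D x‖| := le_abs_self _
  -- Step 1 (Minty): for all B ∈ L², ∫ ⟪S - 𝒮(D), B⟫ ≥ 0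
  have key : ∀ B : U → M3, MemLp B 2 μ →
      0 ≤ ∫ x, ⟪S x - T x, B x⟫ ∂μ := by
    intro B hB
    set t : ℕ → ℝ := fun n => 1 / (n + 1) with ht_def
    have ht_pos : ∀ n, 0 < t n := fun n => by positivity
    have ht_le : ∀ n, t n ≤ 1 := by
      intro n
      rw [ht_def]
      rw [div_le_one (by positivity)]
      simp
    have ht_lim : Tendsto t atTop (𝓝 0) := tendsto_one_div_add_atTop_nhds_zero_nat
    set F : ℕ → U → ℝ := fun n x =>
      ⟪S x - regResponse δ ε (ps x) (p x) (D x - t n • B x), B x⟫ with hF_def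
    -- each ∫ F n is nonneg
    have hFn_nonneg : ∀ n, 0 ≤ ∫ x, F n x ∂μ := by
      intro n
      have hA_mem : MemLp (fun x => D x - t n • B x) 2 μ :=
        hD_mem.sub (hB.const_smul (t n))
      have h0 := h (fun x => D x - t n • B x) hA_mem
      have heq : (fun x => ⟪S x - regResponse δ ε (ps x) (p x) (D x - t n • B x),
          D x - (D x - t n • B x)⟫) = fun x => t n * F n x := by
        funext x
        rw [sub_sub_cancel, real_inner_smul_right]
      rw [heq, integral_const_mul] at h0
      exact nonneg_of_mul_nonneg_right h0 (ht_pos n)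
    -- dominated convergence
    have hbound_int : Integrable (fun x =>
        (‖S x‖ + (max (ps x - p x) 0 + (‖D x‖ + ‖B x‖))) * ‖B x‖) μ := by
      have h1 : MemLp (fun x => ‖S x‖ + (max (ps x - p x) 0 + (‖D x‖ + ‖B x‖))) 2 μ :=
        hS_mem.norm.add (hmax_mem.add (hD_mem.norm.add hB.norm))
      have h2 := integrable_inner_of_memL2 h1 hB.norm
      refine h2.congr ?_
      filter_upwards with x
      simp [real_inner_comm, RCLike.inner_apply, mul_comm]
    have hFb : ∀ n, ∀ᵐ x ∂μ, ‖F n x‖ ≤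
        (‖S x‖ + (max (ps x - p x) 0 + (‖D x‖ + ‖B x‖))) * ‖B x‖ := by
      intro n
      filter_upwards with x
      refine (abs_real_inner_le_norm _ _).trans ?_
      refine mul_le_mul_of_nonneg_right ?_ (norm_nonneg _)
      refine (norm_sub_le _ _).trans ?_
      refine add_le_add_right ?_ _
      refine (norm_regResponse_le δ ε _ _ hδ hε _).trans ?_
      refine add_le_add_right ?_ _
      refine (norm_sub_le _ _).trans ?_
      refine add_le_add_right ?_ _
      rw [norm_smul, Real.norm_eq_abs, abs_of_pos (ht_pos n)]
      nlinarith [ht_le n, ht_pos n, norm_nonneg (B x)]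
    have hF_meas : ∀ n, AEStronglyMeasurable (F n) μ := by
      intro n
      exact (hS_mem.aestronglyMeasurable.sub
        (hreg_aesm _ (hD_mem.sub (hB.const_smul (t n))))).inner hB.aestronglyMeasurable
    have hF_lim : ∀ᵐ x ∂μ, Tendsto (fun n => F n x) atTop (𝓝 (⟪S x - T x, B x⟫)) := by
      filter_upwards with x
      have h1 : Tendsto (fun n : ℕ => D x - t n • B x) atTop (𝓝 (D x)) := by
        have h0 : Tendsto (fun n : ℕ => t n • B x) atTop (𝓝 (0 : M3)) := by
          simpa using ht_lim.smul_const (B x)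
        simpa using (tendsto_const_nhds (x := D x) (f := (atTop : Filter ℕ))).sub h0
      have h3 : Tendsto (fun n => (ps x, p x, D x - t n • B x)) atTop
          (𝓝 (ps x, p x, D x)) :=
        tendsto_const_nhds.prodMk_nhds (tendsto_const_nhds.prodMk_nhds h1)
      have h4 := ((continuous_regResponse δ ε hδ hε).tendsto _).comp h3
      exact ((tendsto_const_nhds.sub h4).inner tendsto_const_nhds)
    have hconv := tendsto_integral_of_dominated_convergence _ hF_meas hbound_int hFb hF_lim
    exact ge_of_tendsto' hconv hFn_nonneg
  -- Step 2: apply with B = S - T and B = -(S - T)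
  have hG_mem : MemLp (fun x => S x - T x) 2 μ := hS_mem.sub hT_mem
  have h1 := key _ hG_mem
  have h2 := key _ hG_mem.neg
  have hint : Integrable (fun x => (⟪S x - T x, S x - T x⟫ : ℝ)) μ :=
    integrable_inner_of_memL2 hG_mem hG_mem
  have h2' : ∫ x, ⟪S x - T x, S x - T x⟫ ∂μ ≤ 0 := by
    simp only [Pi.neg_apply, inner_neg_right, integral_neg] at h2
    linarith
  have hzero : ∫ x, ⟪S x - T x, S x - T x⟫ ∂μ = 0 := le_antisymm h2' h1
  have := (integral_eq_zero_iff_of_nonneg (fun x => real_inner_self_nonneg) hint).mp hzero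
  filter_upwards [this] with x hx
  have : (⟪S x - T x, S x - T x⟫ : ℝ) = 0 := hx
  have := inner_self_eq_zero.mp this
  have := sub_eq_zero.mp this
  exact this
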